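/- Let n, k, d be positive integers and ε > 0, ε′ > 0, δ > 0, 0 ≤ δ′ ≤ 1 reals. Suppose S is a pseudorandom generation steward with randomness complexity m that is a one-query (ε′,δ′)-steward for k adaptively chosen (ε,δ)-concentrated functions f : {0,1}^n → ℝ^d. Then m ≥ (1−δ′)·(n − log₂(2/δ))·k. -/

import Mathlib

open Classical

/-- Probability of `P` under the uniform distribution on a finite type. -/
noncomputable def pr {α : Type*} [Fintype α] (P : α → Prop) : ℝ :=
  ((Finset.univ.filter P).card : ℝ) / (Fintype.card α : ℝ)

/-- `f : {0,1}^n → ℝ^d` is `(ε,δ)`-concentrated at `μ`. -/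
def Concentrated (n d : ℕ) (ε δ : ℝ)
    (f : (Fin n → Bool) → Fin d → ℝ) (μ : Fin d → ℝ) : Prop :=
  pr (fun X : Fin n → Bool => ∃ j, |f X j - μ j| > ε) ≤ δ

/-- A deterministic owner for `k` rounds of `(ε,δ)`-concentrated functions
`{0,1}^n → ℝ^d`: given the history of responses `Y_1,…,Y_{i-1}`, it produces
a function `f_i` together with a point `μ_i` at which `f_i` is concentrated. -/
structure Owner (n k d : ℕ) (ε δ : ℝ) where
  act : List (Fin d → ℝ) → (((Fin n → Bool) → Fin d → ℝ) × (Fin d → ℝ))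
  conc : ∀ ys : List (Fin d → ℝ), ys.length < k →
    Concentrated n d ε δ (act ys).1 (act ys).2

/-- A one-query steward with randomness complexity `m`: in each round it chooses
a query point from its randomness and the past query answers, and it chooses a
response from its randomness and the past and current query answers. -/
structure Steward (n k d m : ℕ) where
  q : (Fin m → Bool) → List (Fin d → ℝ) → (Fin n → Bool)
  r : (Fin m → Bool) → List (Fin d → ℝ) → (Fin d → ℝ) → (Fin d → ℝ)

/-- The interaction `O ↔ S(Z)` for `i` rounds: the list of triples `(Y_i, W_i, μ_i)`. -/
noncomputable def run {n k d m : ℕ} {ε δ : ℝ} (O : Owner n k d ε δ) (S : Steward n k d m)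
    (Z : Fin m → Bool) : ℕ → List ((Fin d → ℝ) × (Fin d → ℝ) × (Fin d → ℝ))
  | 0 => []
  | i + 1 =>
    let h := run O S Z i
    let fμ := O.act (h.map fun p => p.1)
    let X := S.q Z (h.map fun p => p.2.1)
    let W := fμ.1 X
    h ++ [(S.r Z (h.map fun p => p.2.1) W, W, fμ.2)]

/-- `S` is a one-query `(ε',δ')`-steward for `k` adaptively chosen
`(ε,δ)`-concentrated functions `{0,1}^n → ℝ^d`. -/
def IsSteward (n k d m : ℕ) (ε δ ε' δ' : ℝ) (S : Steward n k d m) : Prop :=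
  ∀ O : Owner n k d ε δ,
    pr (fun Z : Fin m → Bool =>
      ∃ p ∈ run O S Z k, ∃ j : Fin d, |p.1 j - p.2.2 j| > ε') ≤ δ'

namespace PRG

noncomputable def enc (n : ℕ) (ε0 : ℝ) (X : Fin n → Bool) : ℝ :=
  ε0 * ((Fintype.equivFin (Fin n → Bool) X : ℕ) : ℝ) / (Fintype.card (Fin n → Bool) : ℝ)

lemma card_pos (n : ℕ) : 0 < (Fintype.card (Fin n → Bool) : ℝ) := by
  exact_mod_cast Fintype.card_pos

lemma enc_nonneg {n : ℕ} {ε0 : ℝ} (h : 0 < ε0) (X : Fin n → Bool) : 0 ≤ enc n ε0 X :=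
  div_nonneg (mul_nonneg h.le (Nat.cast_nonneg _)) (Nat.cast_nonneg _)

lemma enc_lt {n : ℕ} {ε0 : ℝ} (h : 0 < ε0) (X : Fin n → Bool) : enc n ε0 X < ε0 := by
  rw [enc, div_lt_iff₀ (card_pos n)]
  have : ((Fintype.equivFin (Fin n → Bool) X : ℕ) : ℝ) < (Fintype.card (Fin n → Bool) : ℝ) := by
    exact_mod_cast (Fintype.equivFin (Fin n → Bool) X).isLt
  nlinarith
lemma enc_inj {n : ℕ} {ε0 : ℝ} (h : 0 < ε0) {X Y : Fin n → Bool}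
    (hXY : enc n ε0 X = enc n ε0 Y) : X = Y := by
  have hc := (card_pos n).ne'
  rw [enc, enc, div_eq_div_iff hc hc] at hXY
  have h2 : ((Fintype.equivFin (Fin n → Bool) X : ℕ) : ℝ) =
      ((Fintype.equivFin (Fin n → Bool) Y : ℕ) : ℝ) :=
    mul_left_cancel₀ h.ne' (mul_right_cancel₀ hc hXY)
  have h3 : (Fintype.equivFin (Fin n → Bool) X : ℕ) = (Fintype.equivFin (Fin n → Bool) Y : ℕ) := by
    exact_mod_cast h2
  exact (Fintype.equivFin (Fin n → Bool)).injective (Fin.val_injective h3)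


noncomputable def bad {n m : ℕ} (t : ℕ) (A : Finset (Fin m → Bool))
    (qf : (Fin m → Bool) → (Fin n → Bool)) : Finset (Fin n → Bool) :=
  Finset.univ.filter (fun x => A.card < t * (A.filter (fun Z => qf Z = x)).card)

lemma not_mem_bad {n m : ℕ} {t : ℕ} {A : Finset (Fin m → Bool)}
    {qf : (Fin m → Bool) → (Fin n → Bool)} {x : Fin n → Bool} (hx : x ∉ bad t A qf) :
    t * (A.filter (fun Z => qf Z = x)).card ≤ A.card := by
  simp [bad] at hx; exact hx

lemma bad_card_le {n m : ℕ} (t : ℕ) (A : Finset (Fin m → Bool))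
    (qf : (Fin m → Bool) → (Fin n → Bool)) : (bad t A qf).card ≤ t := by
  rcases (bad t A qf).eq_empty_or_nonempty with he | hne
  · simp [he]
  -- sum of fiber cards over bad is at most A.card
  have hdisj : (bad t A qf : Set (Fin n → Bool)).PairwiseDisjoint
      (fun x => A.filter (fun Z => qf Z = x)) := by
    intro a _ b _ hab
    simp only [Finset.disjoint_left, Finset.mem_filter]
    rintro Z ⟨_, rfl⟩ ⟨_, h2⟩
    exact hab h2
  have hsum : ∑ x ∈ bad t A qf, (A.filter (fun Z => qf Z = x)).card ≤ A.card := by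
    rw [← Finset.card_biUnion hdisj]
    exact Finset.card_le_card (by
      intro Z hZ
      rcases Finset.mem_biUnion.mp hZ with ⟨x, _, hx⟩
      exact (Finset.mem_filter.mp hx).1)
  have hlt : (bad t A qf).card * A.card < t * A.card := by
    calc (bad t A qf).card * A.card = ∑ _x ∈ bad t A qf, A.card := by
          rw [Finset.sum_const, smul_eq_mul]
      _ < ∑ x ∈ bad t A qf, t * (A.filter (fun Z => qf Z = x)).card := by
          apply Finset.sum_lt_sum_of_nonempty hne
          intro x hx
          exact (Finset.mem_filter.mp hx).2
      _ = t * ∑ x ∈ bad t A qf, (A.filter (fun Z => qf Z = x)).card := by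
          rw [Finset.mul_sum]
      _ ≤ t * A.card := Nat.mul_le_mul_left t hsum
  have hA : 0 < A.card := by
    by_contra hA0
    push_neg at hA0
    interval_cases h : A.card
    · obtain ⟨x, hx⟩ := hne
      have := (Finset.mem_filter.mp hx).2
      simp [Finset.card_eq_zero.mp h] at this
  exact le_of_lt (Nat.lt_of_mul_lt_mul_right hlt)


lemma pr_le_of_subset {α : Type*} [Fintype α] [Nonempty α] {P : α → Prop} {s : Finset α} {δ : ℝ}
    (h : ∀ a, P a → a ∈ s) (hs : (s.card : ℝ) ≤ δ * (Fintype.card α : ℝ)) : pr P ≤ δ := by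
  unfold pr
  rw [div_le_iff₀ (by exact_mod_cast Fintype.card_pos)]
  calc ((Finset.univ.filter P).card : ℝ) ≤ (s.card : ℝ) := by
        exact_mod_cast Finset.card_le_card (fun a ha => h a (Finset.mem_filter.mp ha).2)
    _ ≤ δ * (Fintype.card α : ℝ) := hs

lemma pr_eq_one {α : Type*} [Fintype α] [Nonempty α] {P : α → Prop} (h : ∀ a, P a) :
    pr P = 1 := by
  unfold pr
  have hu : Finset.univ.filter P = Finset.univ :=
    Finset.eq_univ_iff_forall.mpr (fun a => Finset.mem_filter.mpr ⟨Finset.mem_univ a, h a⟩)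
  rw [hu, Finset.card_univ, div_self]
  exact_mod_cast Fintype.card_pos.ne'

/-- The owner's round function: flag bad points, otherwise a small injective encoding. -/
noncomputable def F (n d : ℕ) (ε0 big : ℝ) {m : ℕ} (t : ℕ) (A : Finset (Fin m → Bool))
    (qf : (Fin m → Bool) → (Fin n → Bool)) (X : Fin n → Bool) : Fin d → ℝ :=
  fun _ => if X ∈ bad t A qf then big else enc n ε0 X

/-- Consistent randomness sets, indexed by the *reversed* history. -/
noncomputable def Arev {n k d m : ℕ} (S : Steward n k d m) (ε0 big : ℝ) (t : ℕ) :
    List (Fin d → ℝ) → Finset (Fin m → Bool)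
  | [] => Finset.univ
  | w :: l =>
      (Arev S ε0 big t l).filter (fun Z =>
        F n d ε0 big t (Arev S ε0 big t l) (fun Z' => S.q Z' l.reverse) (S.q Z l.reverse) = w)

noncomputable def Acon {n k d m : ℕ} (S : Steward n k d m) (ε0 big : ℝ) (t : ℕ)
    (ys : List (Fin d → ℝ)) : Finset (Fin m → Bool) :=
  Arev S ε0 big t ys.reverse

lemma Acon_nil {n k d m : ℕ} (S : Steward n k d m) (ε0 big : ℝ) (t : ℕ) :
    Acon S ε0 big t [] = Finset.univ := rfl

lemma Acon_concat {n k d m : ℕ} (S : Steward n k d m) (ε0 big : ℝ) (t : ℕ)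
    (ys : List (Fin d → ℝ)) (w : Fin d → ℝ) :
    Acon S ε0 big t (ys ++ [w]) =
      (Acon S ε0 big t ys).filter (fun Z =>
        F n d ε0 big t (Acon S ε0 big t ys) (fun Z' => S.q Z' ys) (S.q Z ys) = w) := by
  simp [Acon, Arev]
  congr

/-- The adversarial owner. -/
noncomputable def myOwner (n k d m : ℕ) (S : Steward n k d m) (ε ε' δ : ℝ)
    (hd : 0 < d) (hε : 0 < ε) (hε' : 0 < ε') (hδ : 0 < δ) : Owner n k d ε δ where
  act ys := (fun X => F n d (min ε ε') (ε + ε' + 1) (⌊δ * 2 ^ n⌋₊)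
      (Acon S (min ε ε') (ε + ε' + 1) (⌊δ * 2 ^ n⌋₊) ys) (fun Z => S.q Z ys) X,
    fun _ => 0)
  conc ys _ := by
    have hε0 : 0 < min ε ε' := lt_min hε hε'
    set t := ⌊δ * 2 ^ n⌋₊ with ht
    set A := Acon S (min ε ε') (ε + ε' + 1) t ys with hA
    set qf := fun Z : Fin m → Bool => S.q Z ys with hqf
    unfold Concentrated
    apply pr_le_of_subset (s := bad t A qf)
    · intro X hX
      obtain ⟨j, hj⟩ := hX
      simp only at hj
      by_contra hXb
      rw [F] at hj
      simp only [if_neg hXb, sub_zero] at hj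
      have h1 : |enc n (min ε ε') X| = enc n (min ε ε') X := abs_of_nonneg (enc_nonneg hε0 X)
      rw [h1] at hj
      have := (enc_lt hε0 X).trans_le (min_le_left ε ε')
      linarith
    · have hcardeq : (Fintype.card (Fin n → Bool) : ℝ) = 2 ^ n := by
        simp [Fintype.card_fun]
      rw [hcardeq]
      calc ((bad t A qf).card : ℝ) ≤ ((t : ℕ) : ℝ) := by exact_mod_cast bad_card_le _ _ _
        _ ≤ δ * 2 ^ n := Nat.floor_le (by positivity)
noncomputable def hist {n k d m : ℕ} {ε δ : ℝ} (O : Owner n k d ε δ) (S : Steward n k d m)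
    (Z : Fin m → Bool) (i : ℕ) : List (Fin d → ℝ) :=
  (run O S Z i).map (fun p => p.1)

lemma run_zero {n k d m : ℕ} {ε δ : ℝ} (O : Owner n k d ε δ) (S : Steward n k d m)
    (Z : Fin m → Bool) : run O S Z 0 = [] := rfl

lemma run_map_eq {n k d m : ℕ} {ε δ : ℝ} (O : Owner n k d ε δ) (S : Steward n k d m)
    (hpg : ∀ Z Ws W, S.r Z Ws W = W) (Z : Fin m → Bool) (i : ℕ) :
    (run O S Z i).map (fun p => p.2.1) = hist O S Z i := by
  induction i with
  | zero => rfl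
  | succ i ih => simp [run, hist, hpg, List.map_append] at *; exact ih

lemma run_succ {n k d m : ℕ} {ε δ : ℝ} (O : Owner n k d ε δ) (S : Steward n k d m)
    (hpg : ∀ Z Ws W, S.r Z Ws W = W) (Z : Fin m → Bool) (i : ℕ) :
    run O S Z (i + 1) = run O S Z i ++
      [((O.act (hist O S Z i)).1 (S.q Z (hist O S Z i)),
        (O.act (hist O S Z i)).1 (S.q Z (hist O S Z i)),
        (O.act (hist O S Z i)).2)] := by
  conv_lhs => rw [run]
  rw [run_map_eq O S hpg Z i, hpg]
  rfl

lemma hist_succ {n k d m : ℕ} {ε δ : ℝ} (O : Owner n k d ε δ) (S : Steward n k d m)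
    (hpg : ∀ Z Ws W, S.r Z Ws W = W) (Z : Fin m → Bool) (i : ℕ) :
    hist O S Z (i + 1) = hist O S Z i ++
      [(O.act (hist O S Z i)).1 (S.q Z (hist O S Z i))] := by
  conv_lhs => rw [hist, run_succ O S hpg Z i]
  rw [List.map_append]
  rfl

lemma run_mono {n k d m : ℕ} {ε δ : ℝ} (O : Owner n k d ε δ) (S : Steward n k d m)
    (Z : Fin m → Bool) {i k' : ℕ} (h : i ≤ k') {p} (hp : p ∈ run O S Z i) :
    p ∈ run O S Z k' := by
  induction k' with
  | zero => exact (Nat.le_zero.mp h) ▸ hp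
  | succ k' ih =>
    rcases Nat.lt_or_ge i (k' + 1) with h' | h'
    · have : p ∈ run O S Z k' := ih (Nat.lt_succ_iff.mp h')
      rw [run]
      exact List.mem_append_left _ this
    · exact (le_antisymm h h') ▸ hp

lemma mem_Acon_hist {n k d m : ℕ} (S : Steward n k d m) (ε ε' δ : ℝ)
    (hd : 0 < d) (hε : 0 < ε) (hε' : 0 < ε') (hδ : 0 < δ)
    (hpg : ∀ Z Ws W, S.r Z Ws W = W) (Z : Fin m → Bool) (i : ℕ) :
    Z ∈ Acon S (min ε ε') (ε + ε' + 1) ⌊δ * 2 ^ n⌋₊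
      (hist (myOwner n k d m S ε ε' δ hd hε hε' hδ) S Z i) := by
  induction i with
  | zero => exact Finset.mem_univ Z
  | succ i ih =>
    rw [hist_succ _ S hpg Z i, Acon_concat]
    exact Finset.mem_filter.mpr ⟨ih, rfl⟩

lemma counting {n k d m : ℕ} (S : Steward n k d m) (ε ε' δ : ℝ)
    (hd : 0 < d) (hε : 0 < ε) (hε' : 0 < ε') (hδ : 0 < δ)
    (hpg : ∀ Z Ws W, S.r Z Ws W = W) (Z0 : Fin m → Bool)
    (hgood : ∀ p ∈ run (myOwner n k d m S ε ε' δ hd hε hε' hδ) S Z0 k,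
      ∀ j : Fin d, ¬(|p.1 j - p.2.2 j| > ε')) :
    ∀ i, i ≤ k →
      (Acon S (min ε ε') (ε + ε' + 1) ⌊δ * 2 ^ n⌋₊
        (hist (myOwner n k d m S ε ε' δ hd hε hε' hδ) S Z0 i)).card
        * ⌊δ * 2 ^ n⌋₊ ^ i ≤ 2 ^ m := by
  set ε0 := min ε ε' with hε0def
  have hε0 : 0 < ε0 := lt_min hε hε'
  set big := ε + ε' + 1 with hbig
  set t := ⌊δ * 2 ^ n⌋₊ with ht
  set O := myOwner n k d m S ε ε' δ hd hε hε' hδ with hO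
  intro i
  induction i with
  | zero =>
    intro _
    rw [pow_zero, mul_one]
    calc (Acon S ε0 big t (hist O S Z0 0)).card ≤ Fintype.card (Fin m → Bool) :=
          Finset.card_le_univ _
      _ = 2 ^ m := by simp [Fintype.card_fun]
  | succ i ih =>
    intro hik
    have hik' : i ≤ k := Nat.le_of_succ_le hik
    set ys := hist O S Z0 i with hys
    set A := Acon S ε0 big t ys with hAdef
    set qf := fun Z : Fin m → Bool => S.q Z ys with hqf
    set X0 := S.q Z0 ys with hX0
    have j0 : Fin d := ⟨0, hd⟩
    -- Step 1: X0 is not in the bad set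
    have hX0bad : X0 ∉ bad t A qf := by
      intro hb
      have hp : ((O.act ys).1 X0, (O.act ys).1 X0, (O.act ys).2) ∈ run O S Z0 (i + 1) := by
        rw [run_succ O S hpg Z0 i]
        exact List.mem_append_right _ (List.mem_singleton.mpr rfl)
      have hpk := run_mono O S Z0 hik hp
      have hj := hgood _ hpk j0
      have h1 : (O.act ys).1 X0 j0 = big := by
        show F n d ε0 big t A qf X0 j0 = big
        rw [F, if_pos hb]
      have h2 : (O.act ys).2 j0 = 0 := rfl
      simp only [h1, h2, sub_zero] at hj
      rw [abs_of_pos (by rw [hbig]; linarith)] at hj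
      rw [hbig] at hj
      push_neg at hj
      linarith
    -- Step 2: next consistent set is inside the fiber of X0
    have hsub : Acon S ε0 big t (hist O S Z0 (i + 1)) ⊆ A.filter (fun Z => qf Z = X0) := by
      rw [hist_succ O S hpg Z0 i, ← hys, Acon_concat]
      intro Z hZ
      rcases Finset.mem_filter.mp hZ with ⟨hZA, hZeq⟩
      refine Finset.mem_filter.mpr ⟨hZA, ?_⟩
      have hw : (O.act ys).1 X0 = F n d ε0 big t A qf X0 := rfl
      rw [hw] at hZeq
      have hj := congrFun hZeq j0
      rw [F, F, if_neg hX0bad] at hj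
      by_cases hZb : qf Z ∈ bad t A qf
      · rw [if_pos hZb] at hj
        exfalso
        have hlt : enc n ε0 X0 < ε' := (enc_lt hε0 X0).trans_le (min_le_right ε ε')
        rw [hbig] at hj
        linarith
      · rw [if_neg hZb] at hj
        exact enc_inj hε0 hj
    -- Step 3: combine
    have hfiber : t * (A.filter (fun Z => qf Z = X0)).card ≤ A.card := not_mem_bad hX0bad
    calc (Acon S ε0 big t (hist O S Z0 (i + 1))).card * t ^ (i + 1)
        = (Acon S ε0 big t (hist O S Z0 (i + 1))).card * t * t ^ i := by ring
      _ ≤ (A.filter (fun Z => qf Z = X0)).card * t * t ^ i :=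
          Nat.mul_le_mul_right _ (Nat.mul_le_mul_right _ (Finset.card_le_card hsub))
      _ = t * (A.filter (fun Z => qf Z = X0)).card * t ^ i := by ring
      _ ≤ A.card * t ^ i := Nat.mul_le_mul_right _ hfiber
      _ ≤ 2 ^ m := ih hik'

end PRG
/-- lower bound for pseudorandom generation stewards: if `S` is a
one-query `(ε′,δ′)`-steward that always returns the query answer unmodified
(`r_i(Z,W_1,…,W_i) = W_i`), then its randomness complexity `m` satisfies
`m ≥ (1−δ′)·(n − log₂(2/δ))·k`. -/
theorem prg_steward_lower_bound (n k d m : ℕ) (hn : 0 < n) (hk : 0 < k) (hd : 0 < d)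
    (ε ε' δ δ' : ℝ) (hε : 0 < ε) (hε' : 0 < ε') (hδ : 0 < δ)
    (hδ'0 : 0 ≤ δ') (hδ'1 : δ' ≤ 1)
    (S : Steward n k d m)
    (hpg : ∀ Z Ws W, S.r Z Ws W = W)
    (hS : IsSteward n k d m ε δ ε' δ' S) :
    (1 - δ') * ((n : ℝ) - Real.logb 2 (2 / δ)) * k ≤ m := by
  by_cases hC : (n : ℝ) - Real.logb 2 (2 / δ) ≤ 0
  · have h2 : (0:ℝ) ≤ 1 - δ' := by linarith
    have h1 : (1 - δ') * ((n : ℝ) - Real.logb 2 (2 / δ)) * k ≤ 0 :=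
      mul_nonpos_of_nonpos_of_nonneg (mul_nonpos_of_nonneg_of_nonpos h2 hC) (Nat.cast_nonneg k)
    exact h1.trans (Nat.cast_nonneg m)
  push_neg at hC
  by_cases hδ'lt : δ' < 1
  swap
  · have hone : δ' = 1 := le_antisymm hδ'1 (not_lt.mp hδ'lt)
    rw [hone]
    simpa using Nat.cast_nonneg (α := ℝ) m
  -- main case
  set O := PRG.myOwner n k d m S ε ε' δ hd hε hε' hδ with hO
  have hOS := hS O
  -- find a good Z0
  have hex : ∃ Z0 : Fin m → Bool,
      ∀ p ∈ run O S Z0 k, ∀ j : Fin d, ¬(|p.1 j - p.2.2 j| > ε') := by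
    by_contra hall
    push_neg at hall
    have hone : pr (fun Z : Fin m → Bool =>
        ∃ p ∈ run O S Z k, ∃ j : Fin d, |p.1 j - p.2.2 j| > ε') = 1 :=
      PRG.pr_eq_one hall
    rw [hone] at hOS
    linarith
  obtain ⟨Z0, hgood⟩ := hex
  -- counting
  set t := ⌊δ * 2 ^ n⌋₊ with ht
  have hcount := PRG.counting S ε ε' δ hd hε hε' hδ hpg Z0 hgood k le_rfl
  have hmem := PRG.mem_Acon_hist S ε ε' δ hd hε hε' hδ hpg Z0 k
  have hcard1 : 1 ≤ (PRG.Acon S (min ε ε') (ε + ε' + 1) t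
      (PRG.hist O S Z0 k)).card := Finset.card_pos.mpr ⟨Z0, hmem⟩
  have htk : t ^ k ≤ 2 ^ m := by
    calc t ^ k = 1 * t ^ k := (one_mul _).symm
      _ ≤ (PRG.Acon S (min ε ε') (ε + ε' + 1) t (PRG.hist O S Z0 k)).card * t ^ k :=
          Nat.mul_le_mul_right _ hcard1
      _ ≤ 2 ^ m := hcount
  -- real arithmetic
  have h2δ : (0:ℝ) < 2 / δ := by positivity
  have hlt : 2 / δ < (2:ℝ) ^ (n : ℝ) := by
    have := (Real.logb_lt_iff_lt_rpow (by norm_num) h2δ).mp (by linarith : Real.logb 2 (2/δ) < n)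
    exact this
  rw [Real.rpow_natCast] at hlt
  have hδ2n : 2 < δ * 2 ^ n := by
    rw [div_lt_iff₀ hδ] at hlt
    linarith
  have htgt : δ * 2 ^ n - 1 < (t : ℝ) := by
    have := Nat.lt_floor_add_one (δ * 2 ^ n)
    rw [ht]
    linarith
  have htge : δ * 2 ^ n / 2 ≤ (t : ℝ) := by linarith
  have htpos : (0:ℝ) < t := by linarith
  have htkR : ((t : ℝ)) ^ k ≤ (2 : ℝ) ^ m := by exact_mod_cast htk
  have hlog1 : Real.logb 2 ((t:ℝ) ^ k) ≤ Real.logb 2 ((2:ℝ) ^ m) :=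
    Real.logb_le_logb_of_le (by norm_num) (by positivity) htkR
  rw [Real.logb_pow, Real.logb_pow, Real.logb_self_eq_one (by norm_num)] at hlog1
  -- hlog1 : k * logb 2 t ≤ m * 1
  have hlogt : (n:ℝ) - Real.logb 2 (2/δ) ≤ Real.logb 2 (t:ℝ) := by
    have h1 : Real.logb 2 (δ * 2 ^ n / 2) ≤ Real.logb 2 (t:ℝ) :=
      Real.logb_le_logb_of_le (by norm_num) (by positivity) htge
    have h2 : Real.logb 2 (δ * 2 ^ n / 2) =
        Real.logb 2 δ + (n:ℝ) - 1 := by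
      rw [Real.logb_div (by positivity) (by norm_num),
        Real.logb_mul hδ.ne' (by positivity),
        Real.logb_pow, Real.logb_self_eq_one (by norm_num)]
      ring
    have h3 : Real.logb 2 (2/δ) = 1 - Real.logb 2 δ := by
      rw [Real.logb_div (by norm_num) hδ.ne',
        Real.logb_self_eq_one (by norm_num)]
    rw [h3]
    linarith
  have hCpos : 0 < (n:ℝ) - Real.logb 2 (2/δ) := hC
  have hkpos : (0:ℝ) ≤ (k:ℝ) := Nat.cast_nonneg k
  nlinarith [mul_le_mul_of_nonneg_left hlogt hkpos,
    mul_le_mul_of_nonneg_right (sub_le_self (1:ℝ) hδ'0) (mul_nonneg hCpos.le hkpos)]
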